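/- Let R ⊆ A^q be a submodule such that M = A^q/R is finitely generated as a module over A_d (i.e., the behavior B(R) is strongly relevant of order d). Then there exist a positive integer γ and matrices X(σ₁) ∈ A_d^{δ×γ}, A₁(σ₁),…,A_{n−d}(σ₁) ∈ A_d^{γ×γ}, and C(σ₁) ∈ A_d^{q×γ} such that B(R) = { w : ℤⁿ → ℝ^q | there exists x : ℤⁿ → ℝ^γ with X(σ₁)·x = 0, σ_{d+j}·x = A_j(σ₁)·x for every 1 ≤ j ≤ n−d, and w = C(σ₁)·x }. -/

import Mathlib

set_option synthInstance.maxHeartbeats 1000000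
set_option maxHeartbeats 1000000

noncomputable section

/-- The Laurent polynomial ring `A = ℝ[σ₁^{±1},…,σₙ^{±1}]` in `n` indeterminates,
realized as the group algebra of `ℤⁿ` over `ℝ`. -/
abbrev LP (n : ℕ) : Type := AddMonoidAlgebra ℝ (Fin n → ℤ)

/-- The monomial `σ^ν` for `ν ∈ ℤⁿ`. -/
def mono {n : ℕ} (ν : Fin n → ℤ) : LP n := AddMonoidAlgebra.single ν 1

/-- The Laurent polynomial subring `A_d = ℝ[σ₁^{±1},…,σ_d^{±1}]` in the first `d`
indeterminates, as a subalgebra of `A`: it is generated by the monomials `σ^ν`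
with `ν` supported on the first `d` coordinates. -/
def subA (n d : ℕ) : Subalgebra ℝ (LP n) :=
  Algebra.adjoin ℝ {x | ∃ ν : Fin n → ℤ, (∀ i : Fin n, d ≤ (i : ℕ) → ν i = 0) ∧ x = mono ν}

/-- The index of the variable `σ_{d+j}` for `1 ≤ j ≤ n-d` (0-indexed: `j : Fin (n-d)`). -/
def embIdx {n : ℕ} (d : ℕ) (j : Fin (n - d)) : Fin n :=
  ⟨d + (j : ℕ), by have := j.isLt; omega⟩

/-- The variable `σ_{d+j}` as an element of `A`. -/
def sigmaVar {n : ℕ} (d : ℕ) (j : Fin (n - d)) : LP n := mono (Pi.single (embIdx d j) 1)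

/-- The action of a Laurent polynomial `f ∈ A` on a scalar trajectory `w : ℤⁿ → ℝ`:
`(σ^{ν'} w)(ν) = w(ν + ν')`, extended `ℝ`-linearly. -/
def actS {n : ℕ} (f : LP n) (w : (Fin n → ℤ) → ℝ) : (Fin n → ℤ) → ℝ :=
  fun ν => Finsupp.sum f.coeff fun μ c => c * w (ν + μ)

/-- The action of a row vector `r ∈ A^q` on a vector trajectory `w : ℤⁿ → ℝ^q`:
`r·w = Σᵢ rᵢ·wᵢ`. -/
def actRow {n q : ℕ} (r : Fin q → LP n) (w : (Fin n → ℤ) → Fin q → ℝ) : (Fin n → ℤ) → ℝ :=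
  fun ν => ∑ j, actS (r j) (fun μ => w μ j) ν

/-- The componentwise action of a matrix `P ∈ A^{a×b}` on a trajectory `w : ℤⁿ → ℝ^b`. -/
def actMat {n a b : ℕ} (P : Matrix (Fin a) (Fin b) (LP n)) (w : (Fin n → ℤ) → Fin b → ℝ) :
    (Fin n → ℤ) → Fin a → ℝ :=
  fun ν i => actRow (P i) w ν

/-- The behavior of a submodule `R ⊆ A^q`:
`B(R) = {w : ℤⁿ → ℝ^q | r·w = 0 for all r ∈ R}`. -/
def Behavior {n q : ℕ} (R : Submodule (LP n) (Fin q → LP n)) :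
    Set ((Fin n → ℤ) → Fin q → ℝ) :=
  {w | ∀ r ∈ R, actRow r w = 0}

/-- A matrix `T ∈ ℤ^{n×n}` is ℤ-unimodular if `det T = ±1`. -/
def Unimodular {n : ℕ} (T : Matrix (Fin n) (Fin n) ℤ) : Prop := T.det = 1 ∨ T.det = -1

/-- The `ℝ`-algebra endomorphism `φ_T : A → A` induced by `T ∈ ℤ^{n×n}`,
determined by `φ_T(σ^ν) = σ^{Tν}`. -/
def phiT {n : ℕ} (T : Matrix (Fin n) (Fin n) ℤ) : LP n →ₐ[ℝ] LP n :=
  AddMonoidAlgebra.mapDomainAlgHom ℝ ℝ T.mulVecLin.toAddMonoidHom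

/-- The image `φ̂_T(R)` of a submodule `R ⊆ A^q` under the componentwise extension
`φ̂_T : A^q → A^q` of `φ_T` (the span is taken only to record that it is a submodule;
for unimodular `T` the image is already a submodule). -/
def hatPhiT {n q : ℕ} (T : Matrix (Fin n) (Fin n) ℤ) (R : Submodule (LP n) (Fin q → LP n)) :
    Submodule (LP n) (Fin q → LP n) :=
  Submodule.span (LP n) ((fun r (i : Fin q) => phiT T (r i)) '' (R : Set (Fin q → LP n)))

/-- The annihilator ideal `ann(A^q/R) = {f ∈ A | f·v ∈ R for all v ∈ A^q}`. -/
def annQ {n q : ℕ} (R : Submodule (LP n) (Fin q → LP n)) : Ideal (LP n) :=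
  Submodule.colon R ⊤

/-- The monomial `σ₁^{ν₁}⋯σ_d^{ν_d}` (the part of `σ^ν` in the first `d` variables),
as an element of `A_d`. -/
def monoD (n d : ℕ) (ν : Fin n → ℤ) : subA n d :=
  ⟨mono (fun i => if (i : ℕ) < d then ν i else 0),
   Algebra.subset_adjoin
     ⟨fun i => if (i : ℕ) < d then ν i else 0, fun i hi => if_neg (by omega), rfl⟩⟩

-- ===== auxiliary development =====

lemma mono_mul {n : ℕ} (μ ν : Fin n → ℤ) : mono μ * mono ν = mono (μ + ν) := by
  simp [mono, AddMonoidAlgebra.single_mul_single]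

lemma mono_zero {n : ℕ} : mono (0 : Fin n → ℤ) = 1 := rfl

/-- The shift operator as a linear endomorphism. -/
def shiftOp {n : ℕ} (μ : Fin n → ℤ) : Module.End ℝ ((Fin n → ℤ) → ℝ) where
  toFun w := fun ν => w (ν + μ)
  map_add' _ _ := rfl
  map_smul' _ _ := rfl

def shiftHom (n : ℕ) : Multiplicative (Fin n → ℤ) →* Module.End ℝ ((Fin n → ℤ) → ℝ) where
  toFun μ := shiftOp (Multiplicative.toAdd μ)
  map_one' := by ext w ν; simp [shiftOp]
  map_mul' a b := by ext w ν; simp [shiftOp, Module.End.mul_apply, add_assoc]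

def actAlg (n : ℕ) : LP n →ₐ[ℝ] Module.End ℝ ((Fin n → ℤ) → ℝ) :=
  AddMonoidAlgebra.lift ℝ _ (Fin n → ℤ) (shiftHom n)

lemma actS_eq {n : ℕ} (f : LP n) (w : (Fin n → ℤ) → ℝ) : actS f w = actAlg n f w := by
  funext ν
  rw [actAlg, AddMonoidAlgebra.lift_apply, actS, Finsupp.sum, Finsupp.sum]
  rw [LinearMap.coe_sum, Finset.sum_apply, Finset.sum_apply]
  refine Finset.sum_congr rfl fun μ _ => ?_
  simp [shiftHom, shiftOp, smul_eq_mul]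

lemma actS_mul {n : ℕ} (f g : LP n) (w : (Fin n → ℤ) → ℝ) :
    actS (f * g) w = actS f (actS g w) := by
  rw [actS_eq, actS_eq, actS_eq, map_mul, Module.End.mul_apply]

lemma actS_one {n : ℕ} (w : (Fin n → ℤ) → ℝ) : actS 1 w = w := by
  rw [actS_eq, map_one]; rfl

lemma actS_zero {n : ℕ} (w : (Fin n → ℤ) → ℝ) : actS 0 w = 0 := by
  rw [actS_eq, map_zero]; rfl

lemma actS_add {n : ℕ} (f g : LP n) (w : (Fin n → ℤ) → ℝ) :
    actS (f + g) w = actS f w + actS g w := by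
  rw [actS_eq, actS_eq, actS_eq, map_add]; rfl

lemma actS_wzero {n : ℕ} (f : LP n) : actS f (0 : (Fin n → ℤ) → ℝ) = 0 := by
  rw [actS_eq]; exact map_zero _

lemma actS_wadd {n : ℕ} (f : LP n) (w₁ w₂ : (Fin n → ℤ) → ℝ) :
    actS f (w₁ + w₂) = actS f w₁ + actS f w₂ := by
  rw [actS_eq, actS_eq, actS_eq]; exact map_add _ _ _

lemma actS_wsum {n : ℕ} (f : LP n) {ι : Type*} (s : Finset ι) (w : ι → (Fin n → ℤ) → ℝ) :
    actS f (∑ i ∈ s, w i) = ∑ i ∈ s, actS f (w i) := by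
  simp only [actS_eq]; exact map_sum _ _ _

lemma actS_mono {n : ℕ} (μ : Fin n → ℤ) (w : (Fin n → ℤ) → ℝ) :
    actS (mono μ) w = fun ν => w (ν + μ) := by
  funext ν
  rw [actS, mono, AddMonoidAlgebra.coeff_single]
  rw [Finsupp.sum_single_index (by simp)]
  simp

lemma actS_shift {n : ℕ} (f : LP n) (u : (Fin n → ℤ) → ℝ) (μ : Fin n → ℤ) :
    actS f (fun t => u (t + μ)) = fun ν => actS f u (ν + μ) := by
  funext ν
  rw [actS, actS]
  refine Finsupp.sum_congr fun a _ => ?_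
  rw [add_right_comm]

lemma actRow_eq_sum {n q : ℕ} (r : Fin q → LP n) (w : (Fin n → ℤ) → Fin q → ℝ) :
    actRow r w = ∑ j, actS (r j) (fun μ => w μ j) := by
  funext ν; rw [actRow, Finset.sum_apply]

lemma actRow_add {n q : ℕ} (r s : Fin q → LP n) (w : (Fin n → ℤ) → Fin q → ℝ) :
    actRow (r + s) w = actRow r w + actRow s w := by
  simp only [actRow_eq_sum, Pi.add_apply, actS_add, Finset.sum_add_distrib]

lemma actRow_zero {n q : ℕ} (w : (Fin n → ℤ) → Fin q → ℝ) :
    actRow (0 : Fin q → LP n) w = 0 := by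
  simp only [actRow_eq_sum, Pi.zero_apply, actS_zero, Finset.sum_const_zero]

lemma actRow_smul {n q : ℕ} (f : LP n) (r : Fin q → LP n) (w : (Fin n → ℤ) → Fin q → ℝ) :
    actRow (f • r) w = actS f (actRow r w) := by
  simp only [actRow_eq_sum, Pi.smul_apply, smul_eq_mul, actS_mul, actS_wsum]

/-- `actRow · w` as an additive monoid hom. -/
def actRowHom {n q : ℕ} (w : (Fin n → ℤ) → Fin q → ℝ) :
    (Fin q → LP n) →+ ((Fin n → ℤ) → ℝ) where
  toFun r := actRow r w
  map_zero' := actRow_zero w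
  map_add' r s := actRow_add r s w

lemma actRow_sum {n q : ℕ} {ι : Type*} (s : Finset ι) (r : ι → (Fin q → LP n))
    (w : (Fin n → ℤ) → Fin q → ℝ) :
    actRow (∑ i ∈ s, r i) w = ∑ i ∈ s, actRow (r i) w :=
  map_sum (actRowHom w) r s

lemma actRow_sub {n q : ℕ} (r s : Fin q → LP n) (w : (Fin n → ℤ) → Fin q → ℝ) :
    actRow (r - s) w = actRow r w - actRow s w :=
  map_sub (actRowHom w) r s

lemma actRow_single {n q : ℕ} (i : Fin q) (f : LP n) (w : (Fin n → ℤ) → Fin q → ℝ) :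
    actRow (Pi.single i f) w = actS f (fun μ => w μ i) := by
  rw [actRow_eq_sum]
  rw [Fintype.sum_eq_single i fun j hj => ?_]
  · rw [Pi.single_eq_same]
  · rw [Pi.single_eq_of_ne hj, actS_zero]

/-- Rows annihilating a fixed trajectory form a submodule. -/
def rowAnn {n q : ℕ} (w : (Fin n → ℤ) → Fin q → ℝ) : Submodule (LP n) (Fin q → LP n) where
  carrier := {r | actRow r w = 0}
  add_mem' := by
    intro r s hr hs
    show actRow (r + s) w = 0
    rw [actRow_add, hr, hs, add_zero]
  zero_mem' := actRow_zero w
  smul_mem' := by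
    intro f r hr
    show actRow (f • r) w = 0
    rw [actRow_smul, hr, actS_wzero]

lemma actRow_comb {n a b : ℕ} (v : Fin a → LP n) (G : Fin a → (Fin b → LP n))
    (z : (Fin n → ℤ) → Fin b → ℝ) :
    actRow v (fun ν k => actRow (G k) z ν) = actRow (∑ k, v k • G k) z := by
  rw [actRow_sum]
  rw [actRow_eq_sum]
  refine Finset.sum_congr rfl fun k _ => ?_
  rw [actRow_smul]

lemma actRow_shift {n q : ℕ} (r : Fin q → LP n) (z : (Fin n → ℤ) → Fin q → ℝ)
    (μ : Fin n → ℤ) :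
    actRow r (fun ν => z (ν + μ)) = fun ν => actRow r z (ν + μ) := by
  simp only [actRow_eq_sum]
  funext ν
  rw [Finset.sum_apply, Finset.sum_apply]
  refine Finset.sum_congr rfl fun j _ => ?_
  exact congrFun (actS_shift (r j) (fun t => z t j) μ) ν

-- ===== monomial generation lemmas =====

lemma mono_sum {n : ℕ} {ι : Type*} (s : Finset ι) (f : ι → (Fin n → ℤ)) :
    mono (∑ i ∈ s, f i) = ∏ i ∈ s, mono (f i) := by
  classical
  induction s using Finset.induction with
  | empty => simp [mono_zero]
  | insert _ _ h ih => rw [Finset.sum_insert h, Finset.prod_insert h, ← ih, mono_mul]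

lemma mono_split {n : ℕ} (ν : Fin n → ℤ) : mono ν = ∏ i, mono (Pi.single i (ν i)) := by
  rw [← mono_sum]
  congr 1
  exact (Finset.univ_sum_single ν).symm

lemma mono_single_natpow {n : ℕ} (i : Fin n) (k : ℕ) :
    mono (Pi.single i (k : ℤ)) = mono (Pi.single i 1) ^ k := by
  induction k with
  | zero => simp [mono_zero]
  | succ k ih =>
      rw [pow_succ, ← ih, mono_mul, ← Pi.single_add]
      push_cast
      ring_nf

lemma mono_single_negnatpow {n : ℕ} (i : Fin n) (k : ℕ) :
    mono (Pi.single i (-(k : ℤ))) = mono (Pi.single i (-1)) ^ k := by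
  induction k with
  | zero => simp [mono_zero]
  | succ k ih =>
      rw [pow_succ, ← ih, mono_mul, ← Pi.single_add]
      push_cast
      ring_nf

lemma mono_single_mem {n : ℕ} (S : Subalgebra ℝ (LP n)) (i : Fin n)
    (h1 : mono (Pi.single i 1) ∈ S) (h2 : mono (Pi.single i (-1)) ∈ S) (c : ℤ) :
    mono (Pi.single i c) ∈ S := by
  rcases le_or_gt 0 c with hc | hc
  · obtain ⟨k, rfl⟩ : ∃ k : ℕ, c = (k : ℤ) := ⟨c.toNat, (Int.toNat_of_nonneg hc).symm⟩
    rw [mono_single_natpow]; exact pow_mem h1 k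
  · obtain ⟨k, rfl⟩ : ∃ k : ℕ, c = -(k : ℤ) := ⟨(-c).toNat, by omega⟩
    rw [mono_single_negnatpow]; exact pow_mem h2 k

lemma mono_mem_of_single {n : ℕ} (S : Subalgebra ℝ (LP n)) (ν : Fin n → ℤ)
    (h : ∀ i, mono (Pi.single i (ν i)) ∈ S) : mono ν ∈ S := by
  rw [mono_split]; exact prod_mem fun i _ => h i

lemma lp_mem_of_mono {n : ℕ} (S : Subalgebra ℝ (LP n)) (h : ∀ μ, mono μ ∈ S) (f : LP n) :
    f ∈ S := by
  induction f using AddMonoidAlgebra.induction with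
  | zero => exact S.zero_mem
  | single_add μ c f _ _ ih =>
      refine S.add_mem ?_ ih
      have : (AddMonoidAlgebra.single μ c : LP n) = c • mono μ := by
        rw [mono, AddMonoidAlgebra.smul_single, smul_eq_mul, mul_one]
      rw [this]
      exact S.smul_mem (h μ) c

lemma mono_mem_subA {n d : ℕ} {ν : Fin n → ℤ} (h : ∀ i : Fin n, d ≤ (i : ℕ) → ν i = 0) :
    mono ν ∈ subA n d :=
  Algebra.subset_adjoin ⟨ν, h, rfl⟩

/-- finite generating set for `subA n d` -/
def genF (n d : ℕ) : Set (LP n) :=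
  (fun p : Fin n × Bool => mono (Pi.single p.1 (if p.2 then 1 else -1))) ''
    {p | (p.1 : ℕ) < d}

lemma subA_fg (n d : ℕ) : (subA n d).FG := by
  rw [Subalgebra.fg_def]
  refine ⟨genF n d, (Set.toFinite _).image _, le_antisymm ?_ ?_⟩
  · rw [Algebra.adjoin_le_iff]
    rintro x ⟨⟨i, b⟩, hi, rfl⟩
    refine mono_mem_subA fun t ht => ?_
    exact Pi.single_eq_of_ne (by rintro rfl; exact absurd hi (by simp; omega)) _
  · rw [subA, Algebra.adjoin_le_iff]
    rintro x ⟨ν, hν, rfl⟩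
    refine mono_mem_of_single _ _ fun i => ?_
    by_cases hi : (i : ℕ) < d
    · refine mono_single_mem _ i ?_ ?_ _
      · exact Algebra.subset_adjoin ⟨(i, true), hi, by simp⟩
      · exact Algebra.subset_adjoin ⟨(i, false), hi, by simp⟩
    · rw [hν i (by omega), Pi.single_zero, mono_zero]
      exact one_mem _

lemma subA_noetherian (n d : ℕ) : IsNoetherianRing (subA n d) := by
  have : Algebra.FiniteType ℝ (subA n d) := (Subalgebra.fg_iff_finiteType _).mp (subA_fg n d)
  exact Algebra.FiniteType.isNoetherianRing ℝ _

-- ===== coeRow =====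

/-- Coerce a row over `A_d` to a row over `A`. -/
def coeRow {n d γ : ℕ} (v : Fin γ → subA n d) : Fin γ → LP n := fun k => (v k : LP n)

lemma coeRow_add {n d γ : ℕ} (v u : Fin γ → subA n d) :
    coeRow (v + u) = coeRow v + coeRow u := rfl

lemma coeRow_zero {n d γ : ℕ} : coeRow (0 : Fin γ → subA n d) = 0 := rfl

lemma coeRow_smul {n d γ : ℕ} (c : subA n d) (v : Fin γ → subA n d) :
    coeRow (c • v) = (c : LP n) • coeRow v := rfl

lemma coeRow_sum {n d γ : ℕ} {ι : Type*} (s : Finset ι) (v : ι → Fin γ → subA n d) :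
    coeRow (∑ i ∈ s, v i) = ∑ i ∈ s, coeRow (v i) := by
  funext k
  simp [coeRow]

lemma coeRow_single {n d γ : ℕ} (k : Fin γ) (c : subA n d) :
    coeRow (Pi.single k c) = Pi.single k (c : LP n) := by
  classical
  funext t
  by_cases h : t = k
  · subst h; simp [coeRow]
  · simp [coeRow, Pi.single_eq_of_ne h]

/-- If a trajectory is annihilated by the coercions of a spanning family over `A_d`,
it is annihilated by the coercion of every element of the span. -/
lemma syz_ann {n d γ : ℕ} {Xset : Set (Fin γ → subA n d)} {v : Fin γ → subA n d}
    (hv : v ∈ Submodule.span (subA n d) Xset) {z : (Fin n → ℤ) → Fin γ → ℝ}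
    (hz : ∀ u ∈ Xset, actRow (coeRow u) z = 0) : actRow (coeRow v) z = 0 := by
  induction hv using Submodule.span_induction with
  | mem u hu => exact hz u hu
  | zero => rw [coeRow_zero, actRow_zero]
  | add u₁ u₂ h₁ h₂ ih₁ ih₂ => rw [coeRow_add, actRow_add, ih₁, ih₂, add_zero]
  | smul c u hu ih => rw [coeRow_smul, actRow_smul, ih, actS_wzero]

/-- Membership in an `A`-submodule is inherited by coercions of `A_d`-spans. -/
lemma coe_span_mem {n d γ : ℕ} {Xset : Set (Fin γ → subA n d)} {v : Fin γ → subA n d}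
    (hv : v ∈ Submodule.span (subA n d) Xset) (K' : Submodule (LP n) (Fin γ → LP n))
    (hK : ∀ u ∈ Xset, coeRow u ∈ K') : coeRow v ∈ K' := by
  induction hv using Submodule.span_induction with
  | mem u hu => exact hK u hu
  | zero => rw [coeRow_zero]; exact K'.zero_mem
  | add u₁ u₂ h₁ h₂ ih₁ ih₂ => rw [coeRow_add]; exact K'.add_mem ih₁ ih₂
  | smul c u hu ih => rw [coeRow_smul]; exact K'.smul_mem _ ih

-- ===== linear combination map =====

/-- The `A_d`-linear combination map. -/
def lcMap {n d γ : ℕ} {M : Type*} [AddCommGroup M] [Module (LP n) M]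
    (m : Fin γ → M) : (Fin γ → subA n d) →ₗ[subA n d] M where
  toFun v := ∑ k, (v k : LP n) • m k
  map_add' v u := by
    simp [add_smul, Finset.sum_add_distrib]
  map_smul' c v := by
    simp only [Pi.smul_apply, RingHom.id_apply, Finset.smul_sum, Subalgebra.smul_def]
    refine Finset.sum_congr rfl fun k _ => ?_
    rw [← mul_smul]
    norm_cast

lemma smul_row_red {n d γ : ℕ} (K' : Submodule (LP n) (Fin γ → LP n)) (f : LP n)
    (A : Fin γ → Fin γ → subA n d)
    (hA : ∀ k, f • (Pi.single k 1 : Fin γ → LP n) - coeRow (A k) ∈ K') (v : Fin γ → subA n d) :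
    f • coeRow v - coeRow (fun t => ∑ k, v k * A k t) ∈ K' := by
  classical
  have key : f • coeRow v - coeRow (fun t => ∑ k, v k * A k t)
      = ∑ k, (v k : LP n) • (f • (Pi.single k 1 : Fin γ → LP n) - coeRow (A k)) := by
    funext t
    simp only [Pi.sub_apply, Pi.smul_apply, coeRow, Finset.sum_apply, smul_sub,
      smul_eq_mul, Pi.single_apply, mul_ite, mul_one, mul_zero,
      Finset.sum_sub_distrib]
    rw [Finset.sum_ite_eq Finset.univ t (fun k => (v k : LP n) * f)]
    simp only [Finset.mem_univ, if_pos]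
    push_cast
    ring
  rw [key]
  exact Submodule.sum_mem _ fun k _ => K'.smul_mem _ (hA k)

/-- The set of `f ∈ A` which map `A_d`-rows to `A_d`-rows modulo `K'`. -/
def Wred {n γ : ℕ} (d : ℕ) (K' : Submodule (LP n) (Fin γ → LP n)) : Subalgebra ℝ (LP n) where
  carrier := {f | ∀ v : Fin γ → subA n d, ∃ v' : Fin γ → subA n d,
    f • coeRow v - coeRow v' ∈ K'}
  mul_mem' := by
    intro f g hf hg v
    obtain ⟨v₁, h₁⟩ := hg v
    obtain ⟨v₂, h₂⟩ := hf v₁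
    refine ⟨v₂, ?_⟩
    have : (f * g) • coeRow v - coeRow v₂
        = f • (g • coeRow v - coeRow v₁) + (f • coeRow v₁ - coeRow v₂) := by
      rw [smul_sub, mul_smul]; abel
    rw [this]
    exact K'.add_mem (K'.smul_mem f h₁) h₂
  add_mem' := by
    intro f g hf hg v
    obtain ⟨v₁, h₁⟩ := hf v
    obtain ⟨v₂, h₂⟩ := hg v
    refine ⟨v₁ + v₂, ?_⟩
    have : (f + g) • coeRow v - coeRow (v₁ + v₂)
        = (f • coeRow v - coeRow v₁) + (g • coeRow v - coeRow v₂) := by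
      rw [coeRow_add, add_smul]; abel
    rw [this]
    exact K'.add_mem h₁ h₂
  algebraMap_mem' := by
    intro r v
    refine ⟨algebraMap ℝ (subA n d) r • v, ?_⟩
    have : coeRow (algebraMap ℝ (subA n d) r • v)
        = algebraMap ℝ (LP n) r • coeRow v := by
      rw [coeRow_smul]
      norm_cast
    rw [this, Algebra.algebraMap_eq_smul_one, smul_assoc, one_smul, sub_self]
    exact K'.zero_mem

-- ===== sigmaInv =====

/-- The inverse variable `σ_{d+j}⁻¹`. -/
def sigmaInv {n : ℕ} (d : ℕ) (j : Fin (n - d)) : LP n := mono (Pi.single (embIdx d j) (-1))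

lemma sigmaVar_mul_sigmaInv {n : ℕ} (d : ℕ) (j : Fin (n - d)) :
    sigmaVar d j * sigmaInv d j = 1 := by
  rw [sigmaVar, sigmaInv, mono_mul, ← Pi.single_add]
  norm_num
  exact mono_zero

/-- The `A`-linear combination map. -/
def lcA {n γ : ℕ} {M : Type*} [AddCommGroup M] [Module (LP n) M]
    (m : Fin γ → M) : (Fin γ → LP n) →ₗ[LP n] M where
  toFun v := ∑ k, v k • m k
  map_add' v u := by simp [add_smul, Finset.sum_add_distrib]
  map_smul' c v := by simp [mul_smul, Finset.smul_sum]

lemma lcA_single {n γ : ℕ} {M : Type*} [AddCommGroup M] [Module (LP n) M]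
    (m : Fin γ → M) (k : Fin γ) (f : LP n) :
    lcA m (Pi.single k f) = f • m k := by
  classical
  show (∑ t, (Pi.single k f : Fin γ → LP n) t • m t) = f • m k
  rw [Fintype.sum_eq_single k fun t ht => ?_]
  · rw [Pi.single_eq_same]
  · rw [Pi.single_eq_of_ne ht, zero_smul]

lemma lcA_coeRow {n d γ : ℕ} {M : Type*} [AddCommGroup M] [Module (LP n) M]
    (m : Fin γ → M) (v : Fin γ → subA n d) :
    lcA m (coeRow v) = lcMap (n := n) (d := d) m v := rfl

lemma mem_Wred_iff {n d γ : ℕ} {K' : Submodule (LP n) (Fin γ → LP n)} {f : LP n} :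
    f ∈ Wred d K' ↔ ∀ v : Fin γ → subA n d, ∃ v' : Fin γ → subA n d,
      f • coeRow v - coeRow v' ∈ K' := Iff.rfl

lemma all_mem_Wred {n d γ : ℕ} (K' : Submodule (LP n) (Fin γ → LP n))
    (Amat Bmat : Fin (n - d) → Fin γ → Fin γ → subA n d)
    (hA : ∀ j k, sigmaVar d j • (Pi.single k 1 : Fin γ → LP n) - coeRow (Amat j k) ∈ K')
    (hB : ∀ j k, sigmaInv d j • (Pi.single k 1 : Fin γ → LP n) - coeRow (Bmat j k) ∈ K')
    (f : LP n) : f ∈ Wred d K' := by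
  refine lp_mem_of_mono _ (fun μ => mono_mem_of_single _ _ fun i => ?_) f
  by_cases hi : (i : ℕ) < d
  · -- an element of `A_d`
    have hm : mono (Pi.single i (μ i)) ∈ subA n d :=
      mono_mem_subA fun t ht => Pi.single_eq_of_ne (by rintro rfl; omega) _
    rw [mem_Wred_iff]
    intro v
    refine ⟨(⟨_, hm⟩ : subA n d) • v, ?_⟩
    rw [coeRow_smul]
    simpa using K'.zero_mem
  · -- a (±1)-power of some `σ_{d+j}`
    have hin : (i : ℕ) < n := i.isLt
    set j : Fin (n - d) := ⟨(i : ℕ) - d, by omega⟩ with hj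
    have hij : embIdx d j = i := by
      apply Fin.ext
      simp [embIdx, hj]
      omega
    refine mono_single_mem _ i ?_ ?_ (μ i)
    · rw [mem_Wred_iff]
      intro v
      exact ⟨fun t => ∑ k, v k * Amat j k t, by
        have := smul_row_red K' (sigmaVar d j) (Amat j) (hA j) v
        rwa [sigmaVar, hij] at this⟩
    · rw [mem_Wred_iff]
      intro v
      exact ⟨fun t => ∑ k, v k * Bmat j k t, by
        have := smul_row_red K' (sigmaInv d j) (Bmat j) (hB j) v
        rwa [sigmaInv, hij] at this⟩

lemma lcMap_apply {n d γ : ℕ} {M : Type*} [AddCommGroup M] [Module (LP n) M]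
    (m : Fin γ → M) (v : Fin γ → subA n d) :
    lcMap (n := n) (d := d) m v = ∑ k, (v k : LP n) • m k := rfl

lemma coeRow_sub {n d γ : ℕ} (v u : Fin γ → subA n d) :
    coeRow (v - u) = coeRow v - coeRow u := by
  funext k; simp [coeRow]

theorem stmt5' (n d q : ℕ) (R : Submodule (LP n) (Fin q → LP n))
    (hfg : Module.Finite (subA n d) ((Fin q → LP n) ⧸ R)) :
    ∃ γ : ℕ, 0 < γ ∧ ∃ δ : ℕ,
      ∃ (X : Matrix (Fin δ) (Fin γ) (subA n d))
        (A : Fin (n - d) → Matrix (Fin γ) (Fin γ) (subA n d))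
        (C : Matrix (Fin q) (Fin γ) (subA n d)),
        Behavior R =
          {w : (Fin n → ℤ) → Fin q → ℝ |
            ∃ x : (Fin n → ℤ) → Fin γ → ℝ,
              actMat (X.map fun a => (a : LP n)) x = 0 ∧
              (∀ j : Fin (n - d),
                (fun ν => x (ν + Pi.single (embIdx d j) 1)) =
                  actMat ((A j).map fun a => (a : LP n)) x) ∧
              w = actMat (C.map fun a => (a : LP n)) x} := by
  classical
  haveI : IsNoetherianRing (subA n d) := subA_noetherian n d
  obtain ⟨k₀, m₀, hm₀⟩ :=
    Module.Finite.exists_fin (R := subA n d) (M := (Fin q → LP n) ⧸ R)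
  set γ := k₀ + 1 with hγdef
  let m : Fin γ → (Fin q → LP n) ⧸ R := Fin.cons 0 m₀
  have hm : Submodule.span (subA n d) (Set.range m) = ⊤ := by
    have h0 : Set.range m = insert 0 (Set.range m₀) := Fin.range_cons 0 m₀
    rw [h0, Submodule.span_insert_zero, hm₀]
  have hmem : ∀ y : (Fin q → LP n) ⧸ R, ∃ c : Fin γ → subA n d, (∑ l, c l • m l) = y :=
    fun y => (Submodule.mem_span_range_iff_exists_fun _).mp (by rw [hm]; exact Submodule.mem_top)
  choose g hg using fun k => Submodule.Quotient.mk_surjective R (m k)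
  choose Amat hAm using fun (j : Fin (n - d)) (k : Fin γ) => hmem (sigmaVar d j • m k)
  choose Bmat hBm using fun (j : Fin (n - d)) (k : Fin γ) => hmem (sigmaInv d j • m k)
  choose Cmat hCm using fun (i : Fin q) =>
    hmem (Submodule.Quotient.mk (Pi.single i 1))
  have hAm' : ∀ j k, (∑ l, (Amat j k l : LP n) • m l) = sigmaVar d j • m k := hAm
  have hBm' : ∀ j k, (∑ l, (Bmat j k l : LP n) • m l) = sigmaInv d j • m k := hBm
  have hCm' : ∀ i, (∑ k, (Cmat i k : LP n) • m k) =
      Submodule.Quotient.mk (Pi.single i 1) := hCm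
  obtain ⟨δ, Xr, hXr⟩ := Submodule.fg_iff_exists_fin_generating_family.mp
    (IsNoetherian.noetherian (LinearMap.ker (lcMap (n := n) (d := d) m)))
  have hXker : ∀ i, Xr i ∈ LinearMap.ker (lcMap (n := n) (d := d) m) :=
    fun i => hXr ▸ Submodule.subset_span (Set.mem_range_self i)
  -- the quotient map computation
  have hmkg : ∀ v : Fin γ → LP n,
      Submodule.Quotient.mk (p := R) (∑ k, v k • g k) = lcA m v := by
    intro v
    have h1 : Submodule.Quotient.mk (p := R) (∑ k, v k • g k)
        = R.mkQ (∑ k, v k • g k) := rfl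
    rw [h1, map_sum]
    show (∑ k, R.mkQ (v k • g k)) = ∑ k, v k • m k
    refine Finset.sum_congr rfl fun k _ => ?_
    rw [map_smul, Submodule.mkQ_apply, hg]
  have hrel : ∀ v : Fin γ → LP n, lcA m v = 0 → (∑ k, v k • g k) ∈ R :=
    fun v hv => (Submodule.Quotient.mk_eq_zero R).mp (by rw [hmkg, hv])
  -- relations in R
  have hXrel : ∀ i, (∑ k, coeRow (Xr i) k • g k) ∈ R := by
    intro i
    refine hrel _ ?_
    rw [lcA_coeRow]
    exact hXker i
  have hArel : ∀ j k, sigmaVar d j • g k - (∑ l, coeRow (Amat j k) l • g l) ∈ R := by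
    intro j k
    rw [← Submodule.Quotient.mk_eq_zero R]
    have h2 : Submodule.Quotient.mk (p := R) (sigmaVar d j • g k)
        = sigmaVar d j • m k := by
      rw [show Submodule.Quotient.mk (p := R) (sigmaVar d j • g k)
          = R.mkQ (sigmaVar d j • g k) from rfl, map_smul, Submodule.mkQ_apply, hg]
    rw [show Submodule.Quotient.mk (p := R)
        (sigmaVar d j • g k - ∑ l, coeRow (Amat j k) l • g l)
        = R.mkQ (sigmaVar d j • g k - ∑ l, coeRow (Amat j k) l • g l) from rfl,
      map_sub]
    rw [show R.mkQ (sigmaVar d j • g k) = Submodule.Quotient.mk (p := R)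
        (sigmaVar d j • g k) from rfl, h2]
    rw [show R.mkQ (∑ l, coeRow (Amat j k) l • g l) = Submodule.Quotient.mk (p := R)
        (∑ l, coeRow (Amat j k) l • g l) from rfl, hmkg, lcA_coeRow, lcMap_apply,
      hAm', sub_self]
  have hBrel : ∀ j k, sigmaInv d j • g k - (∑ l, coeRow (Bmat j k) l • g l) ∈ R := by
    intro j k
    rw [← Submodule.Quotient.mk_eq_zero R]
    have h2 : Submodule.Quotient.mk (p := R) (sigmaInv d j • g k)
        = sigmaInv d j • m k := by
      rw [show Submodule.Quotient.mk (p := R) (sigmaInv d j • g k)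
          = R.mkQ (sigmaInv d j • g k) from rfl, map_smul, Submodule.mkQ_apply, hg]
    rw [show Submodule.Quotient.mk (p := R)
        (sigmaInv d j • g k - ∑ l, coeRow (Bmat j k) l • g l)
        = R.mkQ (sigmaInv d j • g k - ∑ l, coeRow (Bmat j k) l • g l) from rfl,
      map_sub]
    rw [show R.mkQ (sigmaInv d j • g k) = Submodule.Quotient.mk (p := R)
        (sigmaInv d j • g k) from rfl, h2]
    rw [show R.mkQ (∑ l, coeRow (Bmat j k) l • g l) = Submodule.Quotient.mk (p := R)
        (∑ l, coeRow (Bmat j k) l • g l) from rfl, hmkg, lcA_coeRow, lcMap_apply,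
      hBm', sub_self]
  have hCrel : ∀ i, (Pi.single i 1 : Fin q → LP n) - (∑ k, coeRow (Cmat i) k • g k) ∈ R := by
    intro i
    rw [← Submodule.Quotient.mk_eq_zero R]
    rw [show Submodule.Quotient.mk (p := R)
        ((Pi.single i 1 : Fin q → LP n) - ∑ k, coeRow (Cmat i) k • g k)
        = R.mkQ ((Pi.single i 1 : Fin q → LP n) - ∑ k, coeRow (Cmat i) k • g k) from rfl,
      map_sub]
    rw [show R.mkQ (∑ k, coeRow (Cmat i) k • g k) = Submodule.Quotient.mk (p := R)
        (∑ k, coeRow (Cmat i) k • g k) from rfl, hmkg, lcA_coeRow, lcMap_apply, hCm']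
    rw [Submodule.mkQ_apply, sub_self]
  refine ⟨γ, Nat.succ_pos _, δ, Matrix.of Xr, fun j => Matrix.of (Amat j),
    Matrix.of Cmat, ?_⟩
  ext w
  simp only [Behavior, Set.mem_setOf_eq]
  constructor
  · -- forward direction
    intro hw
    set x : (Fin n → ℤ) → Fin γ → ℝ := fun ν k => actRow (g k) w ν with hx
    have hcomb : ∀ v : Fin γ → LP n, actRow v x = actRow (∑ k, v k • g k) w :=
      fun v => actRow_comb v g w
    refine ⟨x, ?_, ?_, ?_⟩
    · funext ν i
      have h1 : actMat ((Matrix.of Xr).map fun a => (a : LP n)) x ν i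
          = actRow (coeRow (Xr i)) x ν := rfl
      rw [h1, hcomb, hw _ (hXrel i)]
      rfl
    · intro j
      funext ν k
      have h1 : actMat ((Matrix.of (Amat j)).map fun a => (a : LP n)) x ν k
          = actRow (coeRow (Amat j k)) x ν := rfl
      rw [h1, hcomb]
      have h3 : actRow (sigmaVar d j • g k) w = actRow (∑ l, coeRow (Amat j k) l • g l) w := by
        have h4 := hw _ (hArel j k)
        rw [actRow_sub] at h4
        exact sub_eq_zero.mp h4
      have h5 : actRow (sigmaVar d j • g k) w
          = fun ν => actRow (g k) w (ν + Pi.single (embIdx d j) 1) := by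
        rw [actRow_smul, sigmaVar, actS_mono]
      calc x (ν + Pi.single (embIdx d j) 1) k
          = actRow (g k) w (ν + Pi.single (embIdx d j) 1) := rfl
        _ = actRow (sigmaVar d j • g k) w ν := (congrFun h5 ν).symm
        _ = actRow (∑ l, coeRow (Amat j k) l • g l) w ν := congrFun h3 ν
    · funext ν i
      have h1 : actMat ((Matrix.of Cmat).map fun a => (a : LP n)) x ν i
          = actRow (coeRow (Cmat i)) x ν := rfl
      rw [h1, hcomb]
      have h3 : actRow ((Pi.single i 1 : Fin q → LP n)) w
          = actRow (∑ k, coeRow (Cmat i) k • g k) w := by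
        have h4 := hw _ (hCrel i)
        rw [actRow_sub] at h4
        exact sub_eq_zero.mp h4
      have h5 : actRow ((Pi.single i 1 : Fin q → LP n)) w = fun ν => w ν i := by
        rw [actRow_single]
        exact actS_one _
      rw [← h3, ← congrFun h5 ν]
  · -- backward direction
    rintro ⟨x, hX, hshift, rfl⟩
    intro r hr
    have hXx : ∀ i, actRow (coeRow (Xr i)) x = 0 :=
      fun i => funext fun ν => congrFun (congrFun hX ν) i
    have hsyz : ∀ z : (Fin n → ℤ) → Fin γ → ℝ,
        (∀ i, actRow (coeRow (Xr i)) z = 0) →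
        ∀ v ∈ LinearMap.ker (lcMap (n := n) (d := d) m), actRow (coeRow v) z = 0 := by
      intro z hz v hv
      rw [← hXr] at hv
      exact syz_ann hv (by rintro u ⟨i, rfl⟩; exact hz i)
    have hσ : ∀ (j : Fin (n - d)) (k : Fin γ),
        actRow (sigmaVar d j • (Pi.single k 1 : Fin γ → LP n)) x
        = fun θ => x (θ + Pi.single (embIdx d j) 1) k := by
      intro j k
      have h0 : actRow ((Pi.single k 1 : Fin γ → LP n)) x = fun μ => x μ k := by
        rw [actRow_single]; exact actS_one _
      rw [actRow_smul, h0, sigmaVar, actS_mono]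
    have hAx : ∀ j k, actRow (sigmaVar d j • (Pi.single k 1 : Fin γ → LP n)) x
        = actRow (coeRow (Amat j k)) x := by
      intro j k
      rw [hσ j k]
      funext ν
      exact congrFun (congrFun (hshift j) ν) k
    -- the K' submodule of relations
    set K' : Submodule (LP n) (Fin γ → LP n) := Submodule.span (LP n)
      ((Set.range fun i => coeRow (Xr i)) ∪
       (Set.range fun p : Fin (n - d) × Fin γ =>
         sigmaVar d p.1 • (Pi.single p.2 1 : Fin γ → LP n) - coeRow (Amat p.1 p.2)) ∪
       (Set.range fun p : Fin (n - d) × Fin γ =>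
         sigmaInv d p.1 • (Pi.single p.2 1 : Fin γ → LP n) - coeRow (Bmat p.1 p.2)))
      with hK'
    have hgenX : ∀ i, coeRow (Xr i) ∈ K' :=
      fun i => Submodule.subset_span (Or.inl (Or.inl ⟨i, rfl⟩))
    have hgenA : ∀ j k, sigmaVar d j • (Pi.single k 1 : Fin γ → LP n)
        - coeRow (Amat j k) ∈ K' :=
      fun j k => Submodule.subset_span (Or.inl (Or.inr ⟨(j, k), rfl⟩))
    have hgenB : ∀ j k, sigmaInv d j • (Pi.single k 1 : Fin γ → LP n)
        - coeRow (Bmat j k) ∈ K' :=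
      fun j k => Submodule.subset_span (Or.inr ⟨(j, k), rfl⟩)
    have hK'ker : K' ≤ LinearMap.ker (lcA m) := by
      rw [hK', Submodule.span_le]
      rintro v ((⟨i, rfl⟩ | ⟨p, rfl⟩) | ⟨p, rfl⟩) <;>
        rw [SetLike.mem_coe, LinearMap.mem_ker]
      · rw [lcA_coeRow]
        exact hXker i
      · rw [map_sub, map_smul, lcA_single, one_smul, lcA_coeRow, lcMap_apply,
          hAm' p.1 p.2, sub_self]
      · rw [map_sub, map_smul, lcA_single, one_smul, lcA_coeRow, lcMap_apply,
          hBm' p.1 p.2, sub_self]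
    -- the B rows annihilate x
    have hBx : ∀ j k, actRow (sigmaInv d j • (Pi.single k 1 : Fin γ → LP n)) x
        = actRow (coeRow (Bmat j k)) x := by
      intro j k
      set μ : Fin n → ℤ := Pi.single (embIdx d j) 1 with hμ
      set y : (Fin n → ℤ) → Fin γ → ℝ := fun ν => x (ν + -μ) with hy
      have hXy : ∀ i, actRow (coeRow (Xr i)) y = 0 := by
        intro i
        rw [hy, actRow_shift]
        funext ν
        rw [congrFun (hXx i) (ν + -μ)]
        rfl
      have hxAy : x = fun ν t => actRow (coeRow (Amat j t)) y ν := by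
        funext ν t
        have h1 : actRow (coeRow (Amat j t)) y ν = actRow (coeRow (Amat j t)) x (ν + -μ) := by
          rw [hy, actRow_shift]
        have h2 : actRow (coeRow (Amat j t)) x (ν + -μ) = x ((ν + -μ) + μ) t := by
          rw [← hAx j t, hσ j t]
        have h3 : (ν + -μ) + μ = ν := by abel
        rw [h1, h2, h3]
      -- the BA - I rows are syzygies
      have hBAker : ((fun t => ∑ l, Bmat j k l * Amat j l t) - Pi.single k 1 :
            Fin γ → subA n d)
          ∈ LinearMap.ker (lcMap (n := n) (d := d) m) := by
        rw [LinearMap.mem_ker, ← lcA_coeRow, coeRow_sub, map_sub]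
        have e1 : lcA m (coeRow (Pi.single k (1 : subA n d))) = m k := by
          rw [coeRow_single, OneMemClass.coe_one, lcA_single, one_smul]
        have e2 : lcA m (coeRow (fun t => ∑ l, Bmat j k l * Amat j l t)) = m k := by
          show (∑ t, ((∑ l, Bmat j k l * Amat j l t : subA n d) : LP n) • m t) = m k
          have e3 : ∀ t, ((∑ l, Bmat j k l * Amat j l t : subA n d) : LP n) • m t
              = ∑ l, ((Bmat j k l : LP n) * (Amat j l t : LP n)) • m t := by
            intro t
            push_cast
            rw [Finset.sum_smul]
          rw [Finset.sum_congr rfl fun t _ => e3 t, Finset.sum_comm]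
          have e4 : ∀ l, (∑ t, ((Bmat j k l : LP n) * (Amat j l t : LP n)) • m t)
              = (Bmat j k l : LP n) • (sigmaVar d j • m l) := by
            intro l
            rw [← hAm' j l, Finset.smul_sum]
            refine Finset.sum_congr rfl fun t _ => ?_
            rw [mul_smul]
          rw [Finset.sum_congr rfl fun l _ => e4 l]
          have e5 : (∑ l, (Bmat j k l : LP n) • (sigmaVar d j • m l))
              = sigmaVar d j • ∑ l, (Bmat j k l : LP n) • m l := by
            rw [Finset.smul_sum]
            exact Finset.sum_congr rfl fun l _ => smul_comm _ _ _
          rw [e5, hBm' j k, smul_smul, sigmaVar_mul_sigmaInv, one_smul]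
        rw [e1, e2, sub_self]
      have hBAy := hsyz y hXy _ hBAker
      -- compute the action of the B row on x
      have erow : (∑ t, coeRow (Bmat j k) t • coeRow (Amat j t))
          = coeRow (fun s => ∑ t, Bmat j k t * Amat j t s) := by
        funext s
        simp only [coeRow, Finset.sum_apply, Pi.smul_apply, smul_eq_mul]
        push_cast
        ring
      have erow2 : (fun s => ∑ t, Bmat j k t * Amat j t s)
          = ((fun t => ∑ l, Bmat j k l * Amat j l t) - Pi.single k 1 : Fin γ → subA n d)
            + Pi.single k (1 : subA n d) := by
        funext s
        simp
      have h4 : actRow (coeRow (Bmat j k)) x = fun ν => y ν k := by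
        calc actRow (coeRow (Bmat j k)) x
            = actRow (coeRow (Bmat j k)) (fun ν t => actRow (coeRow (Amat j t)) y ν) := by
              rw [← hxAy]
          _ = actRow (∑ t, coeRow (Bmat j k) t • coeRow (Amat j t)) y := actRow_comb _ _ y
          _ = actRow (coeRow (fun s => ∑ t, Bmat j k t * Amat j t s)) y := by rw [erow]
          _ = fun ν => y ν k := by
              rw [erow2, coeRow_add, actRow_add, hBAy, zero_add, coeRow_single,
                OneMemClass.coe_one, actRow_single]
              exact actS_one _
      rw [h4, actRow_smul, actRow_single]
      have h5 : actS (sigmaInv d j) (fun θ => x θ k) = fun ν => x (ν + Pi.single (embIdx d j) (-1)) k := by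
        rw [sigmaInv, actS_mono]
      rw [show actS (sigmaInv d j) ((fun θ => actS 1 (fun μ' => x μ' k) θ)) = actS (sigmaInv d j) (fun θ => x θ k) from by rw [actS_one]]
      rw [h5]
      funext ν
      rw [hy]
      have h6 : Pi.single (embIdx d j) (-1 : ℤ) = -μ := by
        rw [hμ, ← Pi.single_neg]
      rw [h6]
    have hK'ann : K' ≤ rowAnn x := by
      rw [hK', Submodule.span_le]
      rintro v ((⟨i, rfl⟩ | ⟨p, rfl⟩) | ⟨p, rfl⟩)
      · exact hXx i
      · show actRow _ x = 0
        rw [actRow_sub, hAx p.1 p.2, sub_self]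
      · show actRow _ x = 0
        rw [actRow_sub, hBx p.1 p.2, sub_self]
    -- reduce the row r·C modulo K'
    have hwx : actRow r (actMat ((Matrix.of Cmat).map fun a => (a : LP n)) x)
        = actRow (∑ i, r i • coeRow (Cmat i)) x :=
      actRow_comb r (fun i => coeRow (Cmat i)) x
    have hred : ∀ i, ∃ v'' : Fin γ → subA n d,
        r i • coeRow (Cmat i) - coeRow v'' ∈ K' := fun i =>
      (all_mem_Wred K' Amat Bmat hgenA hgenB (r i)) (Cmat i)
    choose v' hv' using hred
    have hsub : (∑ i, r i • coeRow (Cmat i)) - coeRow (∑ i, v' i) ∈ K' := by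
      rw [coeRow_sum, ← Finset.sum_sub_distrib]
      exact Submodule.sum_mem _ fun i _ => hv' i
    have hlcrC : lcA m (∑ i, r i • coeRow (Cmat i)) = 0 := by
      rw [map_sum]
      have e1 : ∀ i, lcA m (r i • coeRow (Cmat i))
          = r i • Submodule.Quotient.mk (p := R) (Pi.single i 1) := by
        intro i
        rw [map_smul, lcA_coeRow, lcMap_apply, hCm' i]
      rw [Finset.sum_congr rfl fun i _ => e1 i]
      have e2 : (∑ i, r i • Submodule.Quotient.mk (p := R) (Pi.single i 1))
          = Submodule.Quotient.mk (p := R) r := by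
        have e3 : (∑ i, r i • Submodule.Quotient.mk (p := R) (Pi.single i 1))
            = R.mkQ (∑ i, r i • (Pi.single i 1 : Fin q → LP n)) := by
          rw [map_sum]
          refine Finset.sum_congr rfl fun i _ => ?_
          rw [map_smul, Submodule.mkQ_apply]
        rw [e3, Submodule.mkQ_apply]
        congr 1
        funext t
        simp [Finset.sum_apply, Pi.single_apply]
      rw [e2, Submodule.Quotient.mk_eq_zero]
      exact hr
    have hVker : (∑ i, v' i) ∈ LinearMap.ker (lcMap (n := n) (d := d) m) := by
      rw [LinearMap.mem_ker, ← lcA_coeRow]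
      have e : coeRow (∑ i, v' i) = (∑ i, r i • coeRow (Cmat i))
          - ((∑ i, r i • coeRow (Cmat i)) - coeRow (∑ i, v' i)) := by abel
      rw [e, map_sub, hlcrC, LinearMap.mem_ker.mp (hK'ker hsub), sub_self]
    have hVx : actRow (coeRow (∑ i, v' i)) x = 0 := hsyz x hXx _ hVker
    have hsubx : actRow ((∑ i, r i • coeRow (Cmat i)) - coeRow (∑ i, v' i)) x = 0 :=
      hK'ann hsub
    rw [hwx]
    have e : (∑ i, r i • coeRow (Cmat i))
        = ((∑ i, r i • coeRow (Cmat i)) - coeRow (∑ i, v' i)) + coeRow (∑ i, v' i) := by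
      abel
    rw [e, actRow_add, hsubx, hVx, add_zero]

/-- First-order representation theorem for strongly relevant
autonomous systems of order `d`. -/
theorem stmt5 (n d q : ℕ) (R : Submodule (LP n) (Fin q → LP n))
    (hfg : Module.Finite (subA n d) ((Fin q → LP n) ⧸ R)) :
    ∃ γ : ℕ, 0 < γ ∧ ∃ δ : ℕ,
      ∃ (X : Matrix (Fin δ) (Fin γ) (subA n d))
        (A : Fin (n - d) → Matrix (Fin γ) (Fin γ) (subA n d))
        (C : Matrix (Fin q) (Fin γ) (subA n d)),
        Behavior R =
          {w : (Fin n → ℤ) → Fin q → ℝ |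
            ∃ x : (Fin n → ℤ) → Fin γ → ℝ,
              actMat (X.map fun a => (a : LP n)) x = 0 ∧
              (∀ j : Fin (n - d),
                (fun ν => x (ν + Pi.single (embIdx d j) 1)) =
                  actMat ((A j).map fun a => (a : LP n)) x) ∧
              w = actMat (C.map fun a => (a : LP n)) x} :=
  stmt5' n d q R hfg
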